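/- arXiv:math/0703727 — 4 statements merged into one kernel-verified Lean document; each statement's English description precedes it below -/
import Mathlib

section
/- Let M be a module over a commutative ring R with an alternating bilinear form ⟨,⟩. Then the operation x ▷ y = x + ⟨x,y⟩y is right self-distributive: (x ▷ y) ▷ z = (x ▷ z) ▷ (y ▷ z) for all x, y, z ∈ M. -/
theorem symplectic_quandle_self_distrib {R M : Type*} [CommRing R] [AddCommGroup M] [Module R M]
    (B : M →ₗ[R] M →ₗ[R] R)
    (hanti : ∀ x y : M, B x y = - B y x)
    (halt : ∀ x : M, B x x = 0)
    (op : M → M → M) (hop : ∀ x y, op x y = x + (B x y) • y) :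
    ∀ x y z : M, op (op x y) z = op (op x z) (op y z) := by
  intro x y z
  simp only [hop, map_add, map_smul, LinearMap.add_apply, LinearMap.smul_apply, smul_eq_mul,
    halt, smul_add, smul_smul]
  rw [hanti z y]
  module
end

section
/- Let M be a module over a commutative ring R with an alternating bilinear form, with quandle operation x ▷ y = x + ⟨x,y⟩y and dual operation x ▷⁻¹ y = x - ⟨x,y⟩y. Then the two operations distribute over each other: (x ▷ y) ▷⁻¹ z = (x ▷⁻¹ z) ▷ (y ▷⁻¹ z) for all x, y, z ∈ M. -/
theorem symplectic_quandle_mutual_distrib {R M : Type*} [CommRing R] [AddCommGroup M]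
    [Module R M]
    (B : M →ₗ[R] M →ₗ[R] R)
    (hanti : ∀ x y : M, B x y = - B y x)
    (halt : ∀ x : M, B x x = 0)
    (op opInv : M → M → M)
    (hop : ∀ x y, op x y = x + (B x y) • y)
    (hopInv : ∀ x y, opInv x y = x - (B x y) • y) :
    ∀ x y z : M, opInv (op x y) z = op (opInv x z) (opInv y z) := by
  intro x y z
  simp only [hop, hopInv, map_add, map_sub, map_smul, LinearMap.add_apply,
    LinearMap.sub_apply, LinearMap.smul_apply, smul_eq_mul, halt,
    smul_sub, smul_add, smul_smul]
  rw [show (B z) y = -((B y) z) from hanti z y]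
  module
end

section
/- Let F be a field of characteristic not 2, V = F² with the standard symplectic form and quandle operation x ▷ y = x + ⟨x,y⟩y. Suppose x ∈ V with x₂ ≠ 0. Then for any target value z ∈ F, there is a finite sequence of quandle operations ▷ and ▷⁻¹ taking x to an element whose first coordinate equals z and whose second coordinate is still x₂. (Key identity: writing x₁ = z + w, one has w/(c) + w² = (1/(2c) + w·sign)² - (1/(2c))² for appropriate c = ±x₂, allowing completion of the square.) -/
/-- One step of a quandle operation or dual quandle operation. -/
def quandleStep {V : Type*} (op opInv : V → V → V) (a b : V) : Prop :=
  ∃ y : V, b = op a y ∨ b = opInv a y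

theorem symplectic_quandle_change_coord {F : Type*} [Field F]
    (hchar : (2 : F) ≠ 0)
    (B : (F × F) → (F × F) → F)
    (hB : ∀ x y : F × F, B x y = x.1 * y.2 - x.2 * y.1)
    (op opInv : (F × F) → (F × F) → (F × F))
    (hop : ∀ x y, op x y = x + (B x y) • y)
    (hopInv : ∀ x y, opInv x y = x - (B x y) • y) :
    ∀ x : F × F, x.2 ≠ 0 → ∀ z : F,
      ∃ w : F × F, Relation.ReflTransGen (quandleStep op opInv) x w ∧
        w.1 = z ∧ w.2 = x.2 := by
  intro x hx z
  set a : F := (x.1 - z) / x.2 with ha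
  set s : F := (a + 1) / 2 with hs
  set t : F := (a - 1) / 2 with ht
  refine ⟨opInv (op x (s, 0)) (t, 0), ?_, ?_, ?_⟩
  · exact Relation.ReflTransGen.tail
      (Relation.ReflTransGen.single ⟨(s, 0), Or.inl rfl⟩)
      ⟨(t, 0), Or.inr rfl⟩
  · simp only [hop, hopInv, hB, Prod.smul_mk, Prod.fst_add, Prod.fst_sub,
      Prod.snd_add, Prod.snd_sub, smul_eq_mul, mul_zero, mul_one, sub_zero,
      add_zero, zero_mul]
    rw [hs, ht, ha]
    field_simp
    ring
  · simp [hop, hopInv, hB]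
end

section
/- Let F be a finite field or a field of characteristic not 2, and let V = F² with the standard nondegenerate symplectic form. Then the subquandle V \ {0} with operation x ▷ y = x + ⟨x,y⟩y is connected: any nonzero vector can be taken to any other nonzero vector by a finite sequence of operations ▷ and ▷⁻¹. -/
theorem symplectic_quandle_connected {F : Type*} [Field F]
    (hF : Finite F ∨ (2 : F) ≠ 0)
    (B : (F × F) → (F × F) → F)
    (hB : ∀ x y : F × F, B x y = x.1 * y.2 - x.2 * y.1)
    (op opInv : (F × F) → (F × F) → (F × F))
    (hop : ∀ x y, op x y = x + (B x y) • y)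
    (hopInv : ∀ x y, opInv x y = x - (B x y) • y) :
    ∀ x y : F × F, x ≠ 0 → y ≠ 0 →
      Relation.ReflTransGen (quandleStep op opInv) x y := by
  -- scalar of a scaled argument
  have hBsmul : ∀ (x w : F × F) (t : F), B x (t • w) = t * B x w := by
    intro x w t
    rw [hB, hB]
    simp only [Prod.smul_fst, Prod.smul_snd, smul_eq_mul]
    ring
  -- translation invariance along w
  have hBadd : ∀ (x w : F × F) (s : F), B (x + s • w) w = B x w := by
    intro x w s
    rw [hB, hB]
    simp only [Prod.fst_add, Prod.snd_add, Prod.smul_fst, Prod.smul_snd, smul_eq_mul]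
    ring
  have hBsub : ∀ (z y : F × F), B z (y - z) = B z y := by
    intro z y
    rw [hB, hB]
    simp only [Prod.fst_sub, Prod.snd_sub]
    ring
  -- single steps
  have stepP : ∀ (x w : F × F) (t : F),
      quandleStep op opInv x (x + (t * t * B x w) • w) := by
    intro x w t
    refine ⟨t • w, Or.inl ?_⟩
    rw [hop, hBsmul, smul_smul]
    congr 1
    ring
  have stepM : ∀ (x w : F × F) (t : F),
      quandleStep op opInv x (x - (t * t * B x w) • w) := by
    intro x w t
    refine ⟨t • w, Or.inr ?_⟩
    rw [hopInv, hBsmul, smul_smul]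
    congr 1
    ring
  -- line move: from x we can reach x + c • w for any c, if B x w ≠ 0
  have move : ∀ (x w : F × F), B x w ≠ 0 → ∀ c : F,
      Relation.ReflTransGen (quandleStep op opInv) x (x + c • w) := by
    intro x w hxw c
    by_cases h2 : (2 : F) = 0
    · -- char 2, hence finite: squaring is bijective
      have hfin : Finite F := by
        rcases hF with h | h
        · exact h
        · exact absurd h2 h
      have hinj : Function.Injective (fun t : F => t * t) := by
        intro a b hab
        simp only at hab
        have hfac : (a - b) * (a + b) = 0 := by linear_combination hab
        rcases mul_eq_zero.mp hfac with h | h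
        · linear_combination h
        · linear_combination h - b * h2
      have hsurj := Finite.injective_iff_surjective.mp hinj
      obtain ⟨t, ht⟩ := hsurj (c / B x w)
      simp only at ht
      have hc : t * t * B x w = c := by
        rw [ht]; field_simp
      have := stepP x w t
      rw [hc] at this
      exact Relation.ReflTransGen.single this
    · -- char ≠ 2: difference of two squares
      set d := B x w with hd
      set p := (c / d + 1) / 2 with hp
      set q := (c / d - 1) / 2 with hq
      have h1 := stepP x w p
      have h2' := stepM (x + (p * p * B x w) • w) w q
      rw [hBadd] at h2'
      have key : x + (p * p * B x w) • w - (q * q * B x w) • w = x + c • w := by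
        have : p * p * B x w - q * q * B x w = c := by
          rw [hp, hq]
          field_simp
          ring
        rw [add_sub_assoc, ← sub_smul, this]
      rw [key] at h2'
      exact Relation.ReflTransGen.single h1 |>.tail h2'
  -- main argument
  intro x y hx hy
  by_cases hxy : B x y = 0
  · -- x, y parallel: go via an intermediate point
    obtain ⟨w, hw1, hw2⟩ : ∃ w : F × F, B x w ≠ 0 ∧ B w y ≠ 0 := by
      rw [hB] at hxy
      rcases eq_or_ne x.1 0 with h | h
      · have hx2 : x.2 ≠ 0 := by
          intro h2'
          exact hx (Prod.ext h h2')
        refine ⟨(1, 0), ?_, ?_⟩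
        · rw [hB]; simpa using hx2
        · rw [hB]
          simp only [mul_one, zero_mul]
          intro hy2
          have hy2' : y.2 = 0 := by simpa using hy2
          have hy1 : y.1 = 0 := by
            have : x.2 * y.1 = 0 := by
              rw [h] at hxy; linear_combination -hxy
            exact (mul_eq_zero.mp this).resolve_left hx2
          exact hy (Prod.ext hy1 hy2')
      · refine ⟨(0, 1), ?_, ?_⟩
        · rw [hB]; simpa using h
        · rw [hB]
          simp only [zero_mul, one_mul, zero_sub, neg_ne_zero]
          intro hy1
          have hy2 : y.2 = 0 := by
            have : x.1 * y.2 = 0 := by rw [hy1] at hxy; linear_combination hxy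
            exact (mul_eq_zero.mp this).resolve_left h
          exact hy (Prod.ext hy1 hy2)
    have s1 := move x w hw1 1
    have hz : B (x + (1 : F) • w) (y - (x + (1 : F) • w)) ≠ 0 := by
      rw [hBsub]
      rw [hB] at hw2 ⊢
      rw [hB] at hxy
      simp only [Prod.fst_add, Prod.snd_add, Prod.smul_fst, Prod.smul_snd, smul_eq_mul, one_mul]
      intro hcon
      apply hw2
      linear_combination hcon - hxy
    have s2 := move (x + (1 : F) • w) (y - (x + (1 : F) • w)) hz 1
    simp only [one_smul] at s1 s2
    rw [show x + w + (y - (x + w)) = y by abel] at s2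
    exact s1.trans s2
  · have hz : B x (y - x) ≠ 0 := by rw [hBsub]; exact hxy
    have s := move x (y - x) hz 1
    rw [one_smul] at s
    rwa [show x + (y - x) = y by abel] at s
end
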